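/- Every finitely presented group admits a finite triangular presentation: if G is a finitely presented group, then there exist a finite set S and a finite set R of elements of the free group on S, each of which is a product of exactly three letters from S and their inverses (i.e. each relator has word length three), such that G is isomorphic to the group presented by generators S and relators R. -/

import Mathlib

/-- `G` is finitely presented: it is isomorphic to some quotient of a finitely
generated free group by the normal closure of finitely many relators. -/
def IsFinitelyPresented (G : Type*) [Group G] : Prop :=
  ∃ (n : ℕ) (R : Finset (FreeGroup (Fin n))),
    Nonempty (G ≃* FreeGroup (Fin n) ⧸ Subgroup.normalClosure (R : Set (FreeGroup (Fin n))))

section TriangularAux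

open FreeGroup Subgroup


lemma reduce_three {β : Type*} [DecidableEq β] (a b c : β × Bool)
    (h1 : ¬(a.1 = b.1 ∧ a.2 = !b.2)) (h2 : ¬(b.1 = c.1 ∧ b.2 = !c.2)) :
    FreeGroup.reduce [a, b, c] = [a, b, c] := by
  rw [reduce.cons, reduce.cons, reduce_singleton]
  simp only [if_neg h2]
  simp only [if_neg h1]

lemma toWord_three {β : Type*} [DecidableEq β] (a b c : β × Bool)
    (h1 : ¬(a.1 = b.1 ∧ a.2 = !b.2)) (h2 : ¬(b.1 = c.1 ∧ b.2 = !c.2)) :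
    (FreeGroup.mk [a, b, c]).toWord.length = 3 := by
  rw [toWord_mk, reduce_three a b c h1 h2]
  rfl

lemma single_cond {β G : Type*} [Group G] (f : β → G) (x : β × Bool) :
    (FreeGroup.lift f) (FreeGroup.mk [x]) = cond x.2 (f x.1) (f x.1)⁻¹ := by
  rw [lift_mk]
  simp

lemma mk_three {β : Type*} (a b c : β × Bool) :
    FreeGroup.mk [a, b, c] = FreeGroup.mk [a] * FreeGroup.mk [b] * FreeGroup.mk [c] := by
  rw [mul_mk, mul_mk]; rfl

lemma mk_single_true {β : Type*} (x : β) : FreeGroup.mk [(x, true)] = FreeGroup.of x := rfl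

lemma mk_single_false {β : Type*} (x : β) : FreeGroup.mk [(x, false)] = (FreeGroup.of x)⁻¹ := by
  rw [FreeGroup.of, inv_mk]; rfl

namespace TriAux

variable {n : ℕ}

/-- length of a relator's reduced word -/
abbrev kl (r : FreeGroup (Fin n)) : ℕ := r.toWord.length

/-- The extended generating set. -/
abbrev B (R : Finset (FreeGroup (Fin n))) : Type :=
  Fin n ⊕ (Unit ⊕ Unit ⊕ (Σ r : R, Fin (kl (r : FreeGroup (Fin n)))))

variable (R : Finset (FreeGroup (Fin n)))

/-- the letter `p` (forced trivial) -/
def pl : B R := Sum.inr (Sum.inl ())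
/-- the letter `y` (auxiliary, forced trivial) -/
def yl : B R := Sum.inr (Sum.inr (Sum.inl ()))
/-- chain generators -/
def cg (r : R) (i : Fin (kl (r : FreeGroup (Fin n)))) : B R :=
  Sum.inr (Sum.inr (Sum.inr ⟨r, i⟩))

/-- chain letter `C_j`, representing the prefix `p · w[0..j-1]` -/
def Cl (r : R) (j : ℕ) : B R × Bool :=
  if h : 1 ≤ j ∧ j ≤ kl (r : FreeGroup (Fin n)) then
    (cg R r ⟨j - 1, by omega⟩, true) else (pl R, true)

/-- `i`-th letter of the word of `r`, pushed into `B R` -/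
def lt (r : R) (i : Fin (kl (r : FreeGroup (Fin n)))) : B R × Bool :=
  (Sum.inl ((r : FreeGroup (Fin n)).toWord[i.1]'(i.2)).1,
    ((r : FreeGroup (Fin n)).toWord[i.1]'(i.2)).2)

/-- index type of relators of the new presentation -/
abbrev J : Type :=
  (Unit ⊕ Unit ⊕ Unit) ⊕ (Σ r : R, Option (Fin (kl (r : FreeGroup (Fin n)))))

/-- the relators of the new presentation -/
def rel : J R → FreeGroup (B R)
  | .inl (.inl ()) => .mk [(pl R, true), (pl R, true), (pl R, true)]
  | .inl (.inr (.inl ())) => .mk [(pl R, true), (pl R, true), (yl R, false)]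
  | .inl (.inr (.inr ())) => .mk [(yl R, true), (pl R, true), (pl R, true)]
  | .inr ⟨r, none⟩ =>
      .mk [Cl R r (kl (r : FreeGroup (Fin n))), (pl R, true), (pl R, true)]
  | .inr ⟨r, some i⟩ =>
      .mk [(cg R r i, false), Cl R r i.1, lt R r i]

end TriAux

namespace TriAux

variable {n : ℕ} (R : Finset (FreeGroup (Fin n)))

lemma Cl_zero (r : R) : Cl R r 0 = (pl R, true) := by
  simp [Cl]

lemma Cl_succ (r : R) (i : Fin (kl (r : FreeGroup (Fin n)))) :
    Cl R r (i.1 + 1) = (cg R r i, true) := by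
  have h : 1 ≤ i.1 + 1 ∧ i.1 + 1 ≤ kl (r : FreeGroup (Fin n)) := ⟨by omega, by omega⟩
  rw [Cl, dif_pos h]
  congr 1

lemma Cl_snd (r : R) (j : ℕ) : (Cl R r j).2 = true := by
  rw [Cl]; split <;> rfl

end TriAux

namespace TriAux

variable {n : ℕ} (R : Finset (FreeGroup (Fin n)))

/-- the original presented group -/
abbrev Q1 : Type := FreeGroup (Fin n) ⧸ normalClosure (R : Set (FreeGroup (Fin n)))

/-- the triangularly presented group -/
abbrev Q2 : Type := FreeGroup (B R) ⧸ normalClosure (Set.range (rel R))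

/-- projection -/
abbrev pi1 : FreeGroup (Fin n) →* Q1 R :=
  QuotientGroup.mk' (normalClosure (R : Set (FreeGroup (Fin n))))

/-- projection -/
abbrev pi2 : FreeGroup (B R) →* Q2 R :=
  QuotientGroup.mk' (normalClosure (Set.range (rel R)))

/-- inclusion of free groups -/
abbrev f0 : FreeGroup (Fin n) →* FreeGroup (B R) := FreeGroup.map Sum.inl

/-- images of new generators in the old presented group -/
def gb : B R → Q1 R
  | .inl a => pi1 R (.of a)
  | .inr (.inl ()) => 1
  | .inr (.inr (.inl ())) => 1
  | .inr (.inr (.inr ⟨r, i⟩)) => pi1 R (.mk ((r : FreeGroup (Fin n)).toWord.take (i.1 + 1)))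

/-- the backwards map on free groups -/
abbrev g0 : FreeGroup (B R) →* Q1 R := FreeGroup.lift (gb R)

lemma gb_Cl (r : R) (j : ℕ) (hj : j ≤ kl (r : FreeGroup (Fin n))) :
    gb R (Cl R r j).1 = pi1 R (.mk ((r : FreeGroup (Fin n)).toWord.take j)) := by
  rcases Nat.eq_zero_or_pos j with h0 | h1
  · subst h0
    rw [Cl_zero]
    show (1 : Q1 R) = _
    rw [List.take_zero, ← FreeGroup.one_eq_mk, _root_.map_one]
  · rw [Cl, dif_pos ⟨h1, hj⟩]
    show pi1 R (.mk (List.take (j - 1 + 1) _)) = _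
    rw [Nat.sub_add_cancel h1]

lemma g0_single (x : B R × Bool) :
    g0 R (.mk [x]) = cond x.2 (gb R x.1) (gb R x.1)⁻¹ := single_cond _ x

lemma pi1_single (x : Fin n × Bool) :
    pi1 R (.mk [x]) = cond x.2 (pi1 R (.of x.1)) (pi1 R (.of x.1))⁻¹ := by
  rcases x with ⟨a, b⟩
  cases b
  · show pi1 R (.mk [(a, false)]) = (pi1 R (.of a))⁻¹
    rw [mk_single_false, _root_.map_inv]
  · rfl

lemma g0_rel (j : J R) : g0 R (rel R j) = 1 := by
  rcases j with ((⟨⟩ | ⟨⟩ | ⟨⟩) | ⟨r, i⟩)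
  · rw [rel, mk_three, _root_.map_mul, _root_.map_mul]
    simp only [g0_single]
    show (1 : Q1 R) * 1 * 1 = 1
    simp
  · rw [rel, mk_three, _root_.map_mul, _root_.map_mul]
    simp only [g0_single]
    show (1 : Q1 R) * 1 * (1 : Q1 R)⁻¹ = 1
    simp
  · rw [rel, mk_three, _root_.map_mul, _root_.map_mul]
    simp only [g0_single]
    show (1 : Q1 R) * 1 * 1 = 1
    simp
  rcases i with _ | i
  · -- final triangle
    rw [rel, mk_three, _root_.map_mul, _root_.map_mul]
    simp only [g0_single]
    rw [Cl_snd]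
    show gb R (Cl R r (kl (r : FreeGroup (Fin n)))).1 * 1 * 1 = 1
    rw [gb_Cl R r _ le_rfl, List.take_length, FreeGroup.mk_toWord]
    have h1 : pi1 R (r : FreeGroup (Fin n)) = 1 := by
      rw [QuotientGroup.mk'_apply, QuotientGroup.eq_one_iff]
      exact subset_normalClosure r.2
    rw [h1]
    simp
  · -- chain triangle
    rw [rel, mk_three, _root_.map_mul, _root_.map_mul]
    simp only [g0_single]
    rw [Cl_snd]
    have hlt : (cond (lt R r i).2 (gb R (lt R r i).1) (gb R (lt R r i).1)⁻¹)
        = pi1 R (.mk [(r : FreeGroup (Fin n)).toWord[i.1]'(i.2)]) := by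
      rw [pi1_single]
      rfl
    show (gb R (cg R r i))⁻¹ * gb R (Cl R r i.1).1 *
      cond (lt R r i).2 (gb R (lt R r i).1) (gb R (lt R r i).1)⁻¹ = 1
    rw [gb_Cl R r i.1 i.2.le, hlt]
    show (pi1 R (.mk (List.take (i.1 + 1) (r : FreeGroup (Fin n)).toWord)))⁻¹ *
      pi1 R (.mk (List.take i.1 (r : FreeGroup (Fin n)).toWord)) *
      pi1 R (.mk [(r : FreeGroup (Fin n)).toWord[i.1]'(i.2)]) = 1
    rw [mul_assoc, ← _root_.map_mul, mul_mk, List.take_concat_get']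
    simp

end TriAux

namespace TriAux

variable {n : ℕ} (R : Finset (FreeGroup (Fin n)))

lemma pi2_rel (j : J R) : pi2 R (rel R j) = 1 := by
  rw [QuotientGroup.mk'_apply, QuotientGroup.eq_one_iff]
  exact subset_normalClosure ⟨j, rfl⟩

lemma pi2_p : pi2 R (.of (pl R)) = 1 := by
  have h0 := pi2_rel R (.inl (.inl ()))
  have h1 := pi2_rel R (.inl (.inr (.inl ())))
  have h2 := pi2_rel R (.inl (.inr (.inr ())))
  simp only [rel, mk_three, mk_single_true, mk_single_false, _root_.map_mul,
    _root_.map_inv] at h0 h1 h2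
  set P := pi2 R (.of (pl R)) with hP
  set Y := pi2 R (.of (yl R)) with hYdef
  have hY : Y = P * P := (mul_inv_eq_one.mp h1).symm
  rw [hY] at h2
  calc P = (P * P * P * P) * (P * P * P)⁻¹ := by group
  _ = 1 := by rw [h2, h0]; simp

lemma pi2_y : pi2 R (.of (yl R)) = 1 := by
  have h1 := pi2_rel R (.inl (.inr (.inl ())))
  simp only [rel, mk_three, mk_single_true, mk_single_false, _root_.map_mul,
    _root_.map_inv, pi2_p, one_mul] at h1
  exact inv_eq_one.mp h1

lemma f0_single (r : R) (j : ℕ) (hj : j < kl (r : FreeGroup (Fin n))) :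
    f0 R (.mk [(r : FreeGroup (Fin n)).toWord[j]'(hj)]) = .mk [lt R r ⟨j, hj⟩] := by
  rw [map.mk]
  rfl

lemma pi2_Cl (r : R) : ∀ j, j ≤ kl (r : FreeGroup (Fin n)) →
    pi2 R (.mk [Cl R r j]) = pi2 R (f0 R (.mk ((r : FreeGroup (Fin n)).toWord.take j)))
  | 0, _ => by
      rw [Cl_zero, mk_single_true, pi2_p, List.take_zero, ← FreeGroup.one_eq_mk]
      simp
  | (j + 1), hj => by
      have hjk : j < kl (r : FreeGroup (Fin n)) := by omega
      have ih := pi2_Cl r j (by omega)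
      have ht := pi2_rel R (.inr ⟨r, some ⟨j, hjk⟩⟩)
      rw [rel, mk_three, _root_.map_mul, _root_.map_mul, mk_single_false,
        _root_.map_inv, mul_assoc] at ht
      have key : pi2 R (.of (cg R r ⟨j, hjk⟩)) =
          pi2 R (.mk [Cl R r j]) * pi2 R (.mk [lt R r ⟨j, hjk⟩]) :=
        inv_mul_eq_one.mp ht
      rw [show Cl R r (j + 1) = (cg R r ⟨j, hjk⟩, true) from Cl_succ R r ⟨j, hjk⟩,
        mk_single_true, key, ih,
        show (r : FreeGroup (Fin n)).toWord.take (j + 1) =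
          (r : FreeGroup (Fin n)).toWord.take j ++
            [(r : FreeGroup (Fin n)).toWord[j]'(hjk)] from
          (List.take_concat_get' _ _ _).symm,
        ← mul_mk, _root_.map_mul, _root_.map_mul, f0_single]

lemma pi2_f0 (r : R) : pi2 R (f0 R (r : FreeGroup (Fin n))) = 1 := by
  have ht := pi2_rel R (.inr ⟨r, none⟩)
  simp only [rel, mk_three, mk_single_true, _root_.map_mul, pi2_p, mul_one] at ht
  rw [pi2_Cl R r _ le_rfl, List.take_length, FreeGroup.mk_toWord] at ht
  exact ht

/-- the forward map -/
def Fw : Q1 R →* Q2 R :=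
  QuotientGroup.lift _ ((pi2 R).comp (f0 R))
    (normalClosure_le_normal (fun r hr => MonoidHom.mem_ker.mpr (pi2_f0 R ⟨r, hr⟩)))

/-- the backward map -/
def Gw : Q2 R →* Q1 R :=
  QuotientGroup.lift _ (g0 R)
    (normalClosure_le_normal (by
      rintro x ⟨j, rfl⟩
      exact MonoidHom.mem_ker.mpr (g0_rel R j)))

lemma Fw_mk (x : FreeGroup (Fin n)) : Fw R (pi1 R x) = pi2 R (f0 R x) := rfl

lemma Gw_mk (x : FreeGroup (B R)) : Gw R (pi2 R x) = g0 R x := rfl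

/-- the two presentations give isomorphic groups -/
def equiv12 : Q1 R ≃* Q2 R :=
  MonoidHom.toMulEquiv (Fw R) (Gw R)
    (by
      apply QuotientGroup.monoidHom_ext
      apply FreeGroup.ext_hom
      intro a
      show Gw R (Fw R (pi1 R (.of a))) = pi1 R (.of a)
      rw [Fw_mk, Gw_mk]
      show g0 R (.of (Sum.inl a)) = pi1 R (.of a)
      rw [lift_apply_of]
      rfl)
    (by
      apply QuotientGroup.monoidHom_ext
      apply FreeGroup.ext_hom
      intro b
      show Fw R (Gw R (pi2 R (.of b))) = pi2 R (.of b)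
      rw [Gw_mk, lift_apply_of]
      rcases b with a | (⟨⟩ | ⟨⟩ | ⟨r, i⟩)
      · rfl
      · show Fw R 1 = _
        rw [_root_.map_one]
        exact (pi2_p R).symm
      · show Fw R 1 = _
        rw [_root_.map_one]
        exact (pi2_y R).symm
      · show Fw R (pi1 R (.mk ((r : FreeGroup (Fin n)).toWord.take (i.1 + 1)))) = _
        rw [Fw_mk, ← pi2_Cl R r (i.1 + 1) (by omega),
          show Cl R r (i.1 + 1) = (cg R r i, true) from Cl_succ R r i, mk_single_true]
        rfl)

end TriAux

namespace TriAux

variable {n : ℕ} (R : Finset (FreeGroup (Fin n)))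

lemma Cl_fst_ne_inl (r : R) (j : ℕ) (a : Fin n) : (Cl R r j).1 ≠ Sum.inl a := by
  rw [Cl]
  split <;> simp [cg, pl]

lemma cg_ne_Cl_fst (r : R) (i : Fin (kl (r : FreeGroup (Fin n)))) :
    cg R r i ≠ (Cl R r i.1).1 := by
  rw [Cl]
  split
  next h =>
    simp only [cg, ne_eq, Sum.inr.injEq]
    intro hc
    obtain ⟨-, h2⟩ := Sigma.mk.inj_iff.mp hc
    have hv : i.1 = i.1 - 1 := congrArg Fin.val (eq_of_heq h2)
    omega
  next h =>
    simp [cg, pl]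

lemma rel_length {N' : ℕ} (φ : B R → Fin N') (hφ : Function.Injective φ) (j : J R) :
    ((FreeGroup.map φ (rel R j)).toWord).length = 3 := by
  have hpy0 : pl R ≠ yl R := by simp [pl, yl]
  have hpy : φ (pl R) ≠ φ (yl R) := fun hc => hpy0 (hφ hc)
  rcases j with ((⟨⟩ | ⟨⟩ | ⟨⟩) | ⟨r, i⟩)
  · rw [rel, map.mk]
    exact toWord_three _ _ _ (by simp) (by simp)
  · rw [rel, map.mk]
    exact toWord_three _ _ _ (by simp) (by simp [hpy])
  · rw [rel, map.mk]
    exact toWord_three _ _ _ (by simp) (by simp)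
  rcases i with _ | i
  · rw [rel, map.mk]
    refine toWord_three _ _ _ ?_ ?_
    · simp only [List.map_cons, Cl_snd]
      simp
    · simp
  · rw [rel, map.mk]
    refine toWord_three _ _ _ ?_ ?_
    · simp only [List.map_cons]
      intro hc
      exact cg_ne_Cl_fst R r i (hφ hc.1)
    · simp only [List.map_cons, Cl_snd]
      intro hc
      exact Cl_fst_ne_inl R r i.1 _ (hφ hc.1)

end TriAux

open TriAux in
theorem exists_triangular_presentation'
    {G : Type*} [Group G] (h : ∃ (n : ℕ) (R : Finset (FreeGroup (Fin n))),
      Nonempty (G ≃* FreeGroup (Fin n) ⧸ Subgroup.normalClosure (R : Set (FreeGroup (Fin n))))) :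
    ∃ (n : ℕ) (R : Finset (FreeGroup (Fin n))),
      (∀ r ∈ R, (FreeGroup.toWord r).length = 3) ∧
      Nonempty (G ≃* FreeGroup (Fin n) ⧸
        Subgroup.normalClosure (R : Set (FreeGroup (Fin n)))) := by
  obtain ⟨n, R, ⟨e0⟩⟩ := h
  classical
  let N := Fintype.card (B R)
  let e : B R ≃ Fin N := Fintype.equivFin (B R)
  let E : FreeGroup (B R) ≃* FreeGroup (Fin N) := FreeGroup.freeGroupCongr e
  refine ⟨N, Finset.image (fun j => E (rel R j)) Finset.univ, ?_, ?_⟩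
  · intro x hx
    obtain ⟨j, -, rfl⟩ := Finset.mem_image.mp hx
    exact rel_length R e e.injective j
  · have hmap : (Subgroup.normalClosure (Set.range (rel R))).map E.toMonoidHom =
        Subgroup.normalClosure
          ((Finset.image (fun j => E (rel R j)) Finset.univ : Finset (FreeGroup (Fin N))) :
            Set (FreeGroup (Fin N))) := by
      rw [Subgroup.map_normalClosure (Set.range (rel R)) E.toMonoidHom E.surjective]
      congr 1
      rw [Finset.coe_image, Finset.coe_univ, Set.image_univ]
      exact (Set.range_comp _ _).symm
    exact ⟨e0.trans ((equiv12 R).trans (QuotientGroup.congr _ _ E hmap))⟩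


end TriangularAux

/-- **Lemma (Manning, Section 2.1).** Every finitely presented group admits a
finite triangular presentation: one in which every relator has word length exactly
three. -/
theorem exists_triangular_presentation
    {G : Type*} [Group G] (h : IsFinitelyPresented G) :
    ∃ (n : ℕ) (R : Finset (FreeGroup (Fin n))),
      (∀ r ∈ R, (FreeGroup.toWord r).length = 3) ∧
      Nonempty (G ≃* FreeGroup (Fin n) ⧸
        Subgroup.normalClosure (R : Set (FreeGroup (Fin n)))) := by
  exact exists_triangular_presentation' h
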